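/- For n ≥ 2 and real x with 0 < x = 2e/2^n ≤ 1, the inequality e·(1 − 2e/2^n)^(n·(2^n/(2en) − 1)) > 1 holds; equivalently, (1 − 2e/2^n)^(2^n/(2e) − n) > e^{-1}. -/

import Mathlib

/-- The key analytic inequality in the Local Lemma argument: for `n ≥ 2` with
`2e/2^n ≤ 1`, one has `e·(1 - 2e/2^n)^(n·(2^n/(2en) - 1)) > 1`, equivalently
`(1 - 2e/2^n)^(2^n/(2e) - n) > e⁻¹` (real exponents). -/
theorem lll_inequality (n : ℕ) (hn : 2 ≤ n)
    (hx : 2 * Real.exp 1 / 2 ^ n ≤ 1) :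
    1 < Real.exp 1 * (1 - 2 * Real.exp 1 / 2 ^ n)
        ^ ((n : ℝ) * ((2 : ℝ) ^ n / (2 * Real.exp 1 * n) - 1)) ∧
    (Real.exp 1)⁻¹ < (1 - 2 * Real.exp 1 / 2 ^ n)
        ^ ((2 : ℝ) ^ n / (2 * Real.exp 1) - (n : ℝ)) := by
  have hepos : (0:ℝ) < Real.exp 1 := Real.exp_pos 1
  have heub : Real.exp 1 < 2.7182818286 := Real.exp_one_lt_d9
  have helb : (2.7182818283:ℝ) < Real.exp 1 := Real.exp_one_gt_d9
  have h2n : (0:ℝ) < 2 ^ n := by positivity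
  set e := Real.exp 1 with he
  have hn0 : (0:ℝ) < (n:ℝ) := by exact_mod_cast (by omega : 0 < n)
  have hn2 : (2:ℝ) ≤ (n:ℝ) := by exact_mod_cast hn
  have hn3 : 3 ≤ n := by
    by_contra h
    push_neg at h
    have hn2' : n = 2 := by omega
    rw [hn2'] at hx
    rw [div_le_one (by norm_num)] at hx
    have h4 : (2:ℝ)^(2:ℕ) = 4 := by norm_num
    linarith
  set x : ℝ := 2 * e / 2 ^ n with hxdef
  have hx0 : 0 < x := by positivity
  have h8 : (8:ℝ) ≤ 2 ^ n := by
    calc (8:ℝ) = 2 ^ 3 := by norm_num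
    _ ≤ 2 ^ n := by
      apply pow_le_pow_right₀ (by norm_num) hn3
  have hx1 : x < 1 := by
    rw [hxdef, div_lt_one (by positivity)]
    linarith
  have h1x : 0 < 1 - x := by linarith
  set E : ℝ := (2:ℝ) ^ n / (2 * e) - n with hE
  have hEx : E * x = 1 - n * x := by
    rw [hE, hxdef]
    field_simp
  have hL : Real.log (1 - x) < 0 := Real.log_neg h1x (by linarith)
  have hLb : -Real.log (1 - x) ≤ x / (1 - x) := by
    have h := Real.log_le_sub_one_of_pos (show (0:ℝ) < (1-x)⁻¹ by positivity)
    rw [Real.log_inv] at h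
    have : (1 - x)⁻¹ - 1 = x / (1 - x) := by field_simp; ring
    linarith [this ▸ h]
  have hkey : -1 < E * Real.log (1 - x) := by
    rcases le_or_gt E 0 with hE0 | hE0
    · nlinarith [mul_nonneg (neg_nonneg.mpr hE0) (neg_nonneg.mpr hL.le)]
    · have h1 : E * (-Real.log (1 - x)) ≤ E * (x / (1 - x)) :=
        mul_le_mul_of_nonneg_left hLb hE0.le
      have h2 : E * (x / (1 - x)) < 1 := by
        rw [mul_div_assoc', hEx, div_lt_one h1x]
        nlinarith [mul_le_mul_of_nonneg_right hn2 hx0.le]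
      have h3 : E * -Real.log (1 - x) = -(E * Real.log (1 - x)) := by ring
      have h4 : -(E * Real.log (1 - x)) < 1 := by rw [← h3]; exact h1.trans_lt h2
      linarith
  have hmain : (Real.exp 1)⁻¹ < (1 - x) ^ E := by
    rw [Real.rpow_def_of_pos h1x, ← he, ← Real.exp_neg]
    exact Real.exp_lt_exp.mpr (by linarith [hkey, (mul_comm E (Real.log (1-x)))] )
  constructor
  · have hexp : (n : ℝ) * ((2 : ℝ) ^ n / (2 * e * n) - 1) = E := by
      rw [hE]
      field_simp
    rw [hexp]
    rw [← he] at hmain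
    have := mul_lt_mul_of_pos_left hmain hepos
    rwa [mul_inv_cancel₀ hepos.ne'] at this
  · exact hmain
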